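/- Let β ∈ (0,1), t > 0 and λ > 0, and let X be a nonnegative random variable whose moments satisfy E[X^q] = Γ(q+1) t^{qβ}/Γ(qβ+1) for every q > 0 (the moments of an inverse β-stable subordinator at time t). Then: (i) for r ∈ (0, 1/(1−β)), E[exp(λ X^r)] < ∞; (ii) for r > 1/(1−β), E[exp(λ X^r)] = ∞; (iii) for r = 1/(1−β), E[exp(λ X^r)] < ∞ if λ t^{r−1} < (r−1)^{r−1}/r^r, and E[exp(λ X^r)] = ∞ if λ t^{r−1} > (r−1)^{r−1}/r^r. -/

import Mathlib

open MeasureTheory Filter Topology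


open Filter Topology

private lemma succ_pow_le (n : ℕ) : ((n:ℝ) + 1) ^ n ≤ Real.exp 1 * (n:ℝ) ^ n := by
  rcases Nat.eq_zero_or_pos n with h | h
  · subst h; simpa using Real.one_le_exp (le_of_lt one_pos)
  · have hn : (0:ℝ) < n := by exact_mod_cast h
    have h2 : (n:ℝ) + 1 ≤ (n:ℝ) * Real.exp (1/n) := by
      have h3 := Real.add_one_le_exp (1/(n:ℝ))
      have := mul_le_mul_of_nonneg_left h3 hn.le
      calc (n:ℝ)+1 = (n:ℝ)*(1/n + 1) := by field_simp; ring
      _ ≤ n * Real.exp (1/n) := by linarith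
    calc ((n:ℝ)+1)^n ≤ ((n:ℝ) * Real.exp (1/n))^n :=
          pow_le_pow_left₀ (by positivity) h2 n
    _ = (n:ℝ)^n * (Real.exp (1/n))^n := mul_pow _ _ _
    _ = (n:ℝ)^n * Real.exp (n * (1/n)) := by rw [← Real.exp_nat_mul]
    _ = Real.exp 1 * (n:ℝ)^n := by rw [mul_one_div, div_self hn.ne', mul_comm]

/-- `n^n ≤ e^n n!` -/
private lemma pow_le_exp_mul_factorial (n : ℕ) :
    (n : ℝ) ^ n ≤ Real.exp n * n.factorial := by
  induction n with
  | zero => simp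
  | succ n ih =>
    have hn0 : (0:ℝ) ≤ (n:ℝ) + 1 := by positivity
    calc ((n+1:ℕ):ℝ)^(n+1) = ((n:ℝ)+1) * ((n:ℝ)+1)^n := by push_cast; ring
    _ ≤ ((n:ℝ)+1) * (Real.exp 1 * (n:ℝ)^n) := by
        exact mul_le_mul_of_nonneg_left (succ_pow_le n) hn0
    _ ≤ ((n:ℝ)+1) * (Real.exp 1 * (Real.exp n * n.factorial)) := by
        have := mul_le_mul_of_nonneg_left ih (Real.exp_pos 1).le
        exact mul_le_mul_of_nonneg_left this hn0
    _ = Real.exp ((n:ℝ)+1) * (n+1).factorial := by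
        rw [Real.exp_add, Nat.factorial_succ]; push_cast; ring
    _ = Real.exp ((n+1:ℕ):ℝ) * (n+1).factorial := by norm_num

/-- `e · n^(n+1) ≤ (n+1)^(n+1)` for `n ≥ 1` -/
private lemma exp_mul_pow_le (n : ℕ) (hn : 1 ≤ n) :
    Real.exp 1 * (n:ℝ) ^ (n+1) ≤ ((n:ℝ)+1) ^ (n+1) := by
  have hn0 : (0:ℝ) < n := by exact_mod_cast hn
  have h1 : (n:ℝ) * Real.exp (1/((n:ℝ)+1)) ≤ (n:ℝ) + 1 := by
    have h2 := Real.add_one_le_exp (-(1/((n:ℝ)+1)))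
    have h2' : (n:ℝ)/((n:ℝ)+1) ≤ Real.exp (-(1/((n:ℝ)+1))) := by
      have : -(1/((n:ℝ)+1)) + 1 = (n:ℝ)/((n:ℝ)+1) := by field_simp; ring
      linarith [h2, this.ge.trans h2]
    have h4 : Real.exp (1/((n:ℝ)+1)) ≤ ((n:ℝ)+1)/(n:ℝ) := by
      rw [show (1/((n:ℝ)+1)) = -(-(1/((n:ℝ)+1))) by ring, Real.exp_neg]
      rw [inv_le_comm₀ (Real.exp_pos _) (by positivity)]
      calc (((n:ℝ)+1)/(n:ℝ))⁻¹ = (n:ℝ)/((n:ℝ)+1) := by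
            rw [inv_div]
      _ ≤ _ := h2'
    calc (n:ℝ) * Real.exp (1/((n:ℝ)+1)) ≤ (n:ℝ) * (((n:ℝ)+1)/(n:ℝ)) :=
          mul_le_mul_of_nonneg_left h4 hn0.le
    _ = (n:ℝ)+1 := by field_simp
  calc Real.exp 1 * (n:ℝ)^(n+1) = (Real.exp (1/((n:ℝ)+1)))^(n+1) * (n:ℝ)^(n+1) := by
        rw [← Real.exp_nat_mul]
        congr 2
        push_cast; field_simp
  _ = ((n:ℝ) * Real.exp (1/((n:ℝ)+1)))^(n+1) := by rw [← mul_pow]; ring_nf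
  _ ≤ (((n:ℝ)+1))^(n+1) := pow_le_pow_left₀ (by positivity) h1 _

/-- `e^n n! ≤ e · n^(n+1)` for `n ≥ 1` -/
private lemma exp_mul_factorial_le (n : ℕ) (hn : 1 ≤ n) :
    Real.exp n * n.factorial ≤ Real.exp 1 * (n:ℝ) ^ (n+1) := by
  induction n with
  | zero => omega
  | succ n ih =>
    rcases Nat.eq_zero_or_pos n with h | h
    · subst h; norm_num
    · have hih := ih h
      have hn0 : (0:ℝ) < n := by exact_mod_cast h
      have key := exp_mul_pow_le n h
      calc Real.exp ((n+1:ℕ):ℝ) * (n+1).factorial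
          = Real.exp 1 * ((n:ℝ)+1) * (Real.exp n * n.factorial) := by
            push_cast [Nat.factorial_succ, Real.exp_add]; ring
      _ ≤ Real.exp 1 * ((n:ℝ)+1) * (Real.exp 1 * (n:ℝ)^(n+1)) := by
            have : (0:ℝ) ≤ Real.exp 1 * ((n:ℝ)+1) := by positivity
            exact mul_le_mul_of_nonneg_left hih this
      _ ≤ Real.exp 1 * ((n:ℝ)+1) * ((n:ℝ)+1)^(n+1) := by
            have : (0:ℝ) ≤ Real.exp 1 * ((n:ℝ)+1) := by positivity
            exact mul_le_mul_of_nonneg_left key this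
      _ = Real.exp 1 * ((n+1:ℕ):ℝ)^(n+1+1) := by push_cast; ring


private lemma gamma_mono : MonotoneOn Real.Gamma (Set.Ici 2) :=
  Real.Gamma_strictMonoOn_Ici.monotoneOn

/-- lower Stirling bound: `x^x ≤ e^x · x · Γ(x+1)` for `x ≥ 1` -/
private lemma gamma_lower (x : ℝ) (hx : 1 ≤ x) :
    x ^ x ≤ Real.exp x * x * Real.Gamma (x + 1) := by
  set m := ⌊x⌋₊ with hmdef
  have hx0 : (0:ℝ) < x := by linarith
  have hm1 : 1 ≤ m := Nat.le_floor (by exact_mod_cast hx)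
  have hmx : (m:ℝ) ≤ x := Nat.floor_le hx0.le
  have hxm : x < m + 1 := Nat.lt_floor_add_one x
  have hm0 : (0:ℝ) < m := by exact_mod_cast hm1
  have e1 : x ^ x = x ^ (x - 1 : ℝ) * x := by
    rw [← Real.rpow_add_one hx0.ne' (x-1)]; norm_num
  have e2 : x ^ (x - 1 : ℝ) ≤ x ^ ((m:ℝ)) :=
    Real.rpow_le_rpow_of_exponent_le hx (by linarith)
  have e3 : x ^ ((m:ℝ)) = x ^ m := Real.rpow_natCast x m
  have hxle : x ≤ (m:ℝ) * Real.exp (x/m - 1) := by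
    have h := Real.add_one_le_exp (x/m - 1)
    calc x = (m:ℝ) * (x/m - 1 + 1) := by field_simp; ring
    _ ≤ (m:ℝ) * Real.exp (x/m - 1) := mul_le_mul_of_nonneg_left h hm0.le
  have e4 : x ^ m ≤ (m:ℝ)^m * Real.exp (x - m) := by
    calc x ^ m ≤ ((m:ℝ) * Real.exp (x/m - 1))^m :=
          pow_le_pow_left₀ hx0.le hxle m
    _ = (m:ℝ)^m * (Real.exp (x/m - 1))^m := mul_pow _ _ _
    _ = (m:ℝ)^m * Real.exp (m * (x/m - 1)) := by rw [← Real.exp_nat_mul]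
    _ = (m:ℝ)^m * Real.exp (x - m) := by
        congr 1
        field_simp
  -- m^m ≤ exp m * m!
  have e5 : (m:ℝ)^m ≤ Real.exp m * m.factorial := pow_le_exp_mul_factorial m
  have e6 : (m.factorial : ℝ) ≤ Real.Gamma (x+1) := by
    have hm1' : (1:ℝ) ≤ m := by exact_mod_cast hm1
    have h := gamma_mono (Set.mem_Ici.2 (by linarith : (2:ℝ) ≤ (m:ℝ)+1))
      (Set.mem_Ici.2 (by linarith : (2:ℝ) ≤ x+1)) (by linarith)
    rwa [Real.Gamma_nat_eq_factorial] at h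
  calc x ^ x = x ^ (x-1:ℝ) * x := e1
  _ ≤ x ^ m * x := by rw [← e3]; exact mul_le_mul_of_nonneg_right e2 hx0.le
  _ ≤ ((m:ℝ)^m * Real.exp (x - m)) * x := mul_le_mul_of_nonneg_right e4 hx0.le
  _ ≤ ((Real.exp m * m.factorial) * Real.exp (x - m)) * x := by
      have := mul_le_mul_of_nonneg_right e5 (Real.exp_pos (x - m)).le
      exact mul_le_mul_of_nonneg_right this hx0.le
  _ = (Real.exp ↑m * Real.exp (x - ↑m)) * x * (m.factorial : ℝ) := by ring
  _ = Real.exp x * x * (m.factorial : ℝ) := by rw [← Real.exp_add]; norm_num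
  _ ≤ Real.exp x * x * Real.Gamma (x+1) := by
      exact mul_le_mul_of_nonneg_left e6 (by positivity)

/-- upper Stirling bound: `e^x Γ(x+1) ≤ e² (x+1)² x^x` for `x ≥ 1` -/
private lemma gamma_upper (x : ℝ) (hx : 1 ≤ x) :
    Real.exp x * Real.Gamma (x + 1) ≤ Real.exp 2 * (x+1)^2 * x ^ x := by
  set m := ⌊x⌋₊ with hmdef
  have hx0 : (0:ℝ) < x := by linarith
  have hm1 : 1 ≤ m := Nat.le_floor (by exact_mod_cast hx)
  have hmx : (m:ℝ) ≤ x := Nat.floor_le hx0.le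
  have hxm : x < m + 1 := Nat.lt_floor_add_one x
  have e1 : Real.Gamma (x+1) ≤ ((m+1).factorial : ℝ) := by
    have hm1' : (1:ℝ) ≤ m := by exact_mod_cast hm1
    have h := gamma_mono (Set.mem_Ici.2 (by linarith : (2:ℝ) ≤ x+1))
      (Set.mem_Ici.2 (by push_cast; linarith : (2:ℝ) ≤ ((m+1:ℕ):ℝ)+1))
      (by push_cast; linarith)
    rwa [Real.Gamma_nat_eq_factorial (m+1)] at h
  have e2 : Real.exp x * ((m+1).factorial:ℝ) ≤ Real.exp 1 * ((m:ℝ)+1)^(m+2) := by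
    calc Real.exp x * ((m+1).factorial:ℝ) ≤ Real.exp ((m:ℕ)+1:ℕ) * ((m+1).factorial:ℝ) := by
          apply mul_le_mul_of_nonneg_right _ (by positivity)
          apply Real.exp_le_exp.2; push_cast; linarith
    _ ≤ Real.exp 1 * ((m+1:ℕ):ℝ)^(m+1+1) := exp_mul_factorial_le (m+1) (by omega)
    _ = Real.exp 1 * ((m:ℝ)+1)^(m+2) := by push_cast; ring
  have e3 : ((m:ℝ)+1)^(m+2) ≤ (x+1)^(m+2) :=
    pow_le_pow_left₀ (by positivity) (by linarith) _
  have e4 : (x+1)^(m+2) ≤ (x+1) ^ (x+2:ℝ) := by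
    rw [← Real.rpow_natCast (x+1) (m+2)]
    apply Real.rpow_le_rpow_of_exponent_le (by linarith)
    push_cast; linarith
  have e5 : (x+1) ^ (x+2:ℝ) = (x+1) ^ (x:ℝ) * (x+1)^2 := by
    rw [← Real.rpow_natCast (x+1) 2, ← Real.rpow_add (by linarith)]
    norm_num
  have e6 : (x+1) ^ (x:ℝ) ≤ x ^ x * Real.exp 1 := by
    have hxe : x + 1 ≤ x * Real.exp (1/x) := by
      have h := Real.add_one_le_exp (1/x)
      calc x + 1 = x * (1/x + 1) := by field_simp; ring
      _ ≤ x * Real.exp (1/x) := mul_le_mul_of_nonneg_left h hx0.le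
    calc (x+1) ^ (x:ℝ) ≤ (x * Real.exp (1/x)) ^ (x:ℝ) :=
          Real.rpow_le_rpow (by linarith) hxe hx0.le
    _ = x ^ x * (Real.exp (1/x)) ^ (x:ℝ) := Real.mul_rpow hx0.le (Real.exp_pos _).le
    _ = x ^ x * Real.exp ((1/x) * x) := by
        rw [Real.rpow_def_of_pos (Real.exp_pos _), Real.log_exp]
    _ = x ^ x * Real.exp 1 := by rw [one_div, inv_mul_cancel₀ hx0.ne']
  calc Real.exp x * Real.Gamma (x+1) ≤ Real.exp x * ((m+1).factorial:ℝ) :=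
        mul_le_mul_of_nonneg_left e1 (Real.exp_pos _).le
  _ ≤ Real.exp 1 * ((m:ℝ)+1)^(m+2) := e2
  _ ≤ Real.exp 1 * (x+1)^(m+2) := mul_le_mul_of_nonneg_left e3 (Real.exp_pos _).le
  _ ≤ Real.exp 1 * (x+1)^(x+2:ℝ) := mul_le_mul_of_nonneg_left e4 (Real.exp_pos _).le
  _ = Real.exp 1 * ((x+1) ^ (x:ℝ) * (x+1)^2) := by rw [e5]
  _ ≤ Real.exp 1 * ((x ^ x * Real.exp 1) * (x+1)^2) := by
      apply mul_le_mul_of_nonneg_left _ (Real.exp_pos _).le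
      exact mul_le_mul_of_nonneg_right e6 (by positivity)
  _ = Real.exp 2 * (x+1)^2 * x ^ x := by
      rw [show (2:ℝ) = 1 + 1 by norm_num, Real.exp_add]; ring


/-- two-sided log-factorial bound, `n ≥ 1` -/
private lemma log_factorial_bounds (n : ℕ) (hn : 1 ≤ n) :
    (n:ℝ) * Real.log n - n ≤ Real.log (n.factorial) ∧
    Real.log (n.factorial) ≤ 1 + ((n:ℝ)+1) * Real.log n - n := by
  have hn0 : (0:ℝ) < n := by exact_mod_cast hn
  have hf0 : (0:ℝ) < n.factorial := by exact_mod_cast n.factorial_pos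
  constructor
  · have h := pow_le_exp_mul_factorial n
    have := Real.log_le_log (by positivity) h
    rw [Real.log_pow, Real.log_mul (Real.exp_pos _).ne' hf0.ne', Real.log_exp] at this
    linarith
  · have h := exp_mul_factorial_le n hn
    have := Real.log_le_log (by positivity) h
    rw [Real.log_mul (Real.exp_pos _).ne' hf0.ne', Real.log_exp,
      Real.log_mul (Real.exp_pos _).ne' (by positivity), Real.log_exp, Real.log_pow] at this
    push_cast at this
    linarith

private lemma log_gamma_bounds (x : ℝ) (hx : 1 ≤ x) :
    x * Real.log x - x - Real.log x ≤ Real.log (Real.Gamma (x+1)) ∧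
    Real.log (Real.Gamma (x+1)) ≤ 2 + 2*Real.log (x+1) + x * Real.log x - x := by
  have hx0 : (0:ℝ) < x := by linarith
  have hG : 0 < Real.Gamma (x+1) := Real.Gamma_pos_of_pos (by linarith)
  constructor
  · have h := gamma_lower x hx
    have h2 := Real.log_le_log (by positivity) h
    rw [Real.log_rpow hx0, Real.log_mul (by positivity) hG.ne',
      Real.log_mul (Real.exp_pos _).ne' hx0.ne', Real.log_exp] at h2
    linarith

  · have h := gamma_upper x hx
    have h2 := Real.log_le_log (by positivity) h
    rw [Real.log_mul (Real.exp_pos _).ne' hG.ne', Real.log_exp,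
      Real.log_mul (by positivity) (by positivity), Real.log_mul (Real.exp_pos _).ne' (by positivity),
      Real.log_exp, Real.log_pow, Real.log_rpow hx0] at h2
    push_cast at h2
    linarith


private lemma A_log_est (lam t r β : ℝ) (hlam : 0 < lam) (ht : 0 < t) (hr : 0 < r)
    (hβ0 : 0 < β) (hβ1 : β < 1) (n : ℕ) (hn : 1 ≤ (n:ℝ) * (r*β)) :
    |Real.log (lam^n / n.factorial *
        (Real.Gamma (r*n+1) * t^(r*(n:ℝ)*β) / Real.Gamma (r*n*β+1)))
      - n*((Real.log lam + r*Real.log r + r*β*Real.log t + 1 - r + r*β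
            - r*β*Real.log (r*β)) + (r-1-r*β)*Real.log n)|
    ≤ (3 + 4*Real.log (r+1)) + 4*Real.log ((n:ℝ)+1) := by
  have hrβ : 0 < r*β := mul_pos hr hβ0
  have hnne : n ≠ 0 := by
    rintro rfl; simp at hn; linarith
  have hn1 : (1:ℝ) ≤ n := by exact_mod_cast Nat.one_le_iff_ne_zero.2 hnne
  have hn0 : (0:ℝ) < n := by linarith
  have hy1 : 1 ≤ r*(n:ℝ)*β := by
    have : r*(n:ℝ)*β = (n:ℝ)*(r*β) := by ring
    linarith
  have hx0 : (0:ℝ) < r*(n:ℝ) := by positivity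
  have hyx : r*(n:ℝ)*β ≤ r*(n:ℝ) := mul_le_of_le_one_right hx0.le hβ1.le
  have hx1 : 1 ≤ r*(n:ℝ) := by linarith
  have hy0 : (0:ℝ) < r*(n:ℝ)*β := by linarith
  have hexpand : (r+1)*((n:ℝ)+1) = r*(n:ℝ) + r + (n:ℝ) + 1 := by ring
  have hGx0 : 0 < Real.Gamma (r*(n:ℝ)+1) := Real.Gamma_pos_of_pos (by linarith)
  have hGy0 : 0 < Real.Gamma (r*(n:ℝ)*β+1) := Real.Gamma_pos_of_pos (by linarith)
  have hfpos : (0:ℝ) < n.factorial := by exact_mod_cast n.factorial_pos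
  -- decompose the logarithm
  have hlogA : Real.log (lam^n / n.factorial *
        (Real.Gamma (r*n+1) * t^(r*(n:ℝ)*β) / Real.Gamma (r*n*β+1)))
      = n*Real.log lam - Real.log (n.factorial)
        + Real.log (Real.Gamma (r*(n:ℝ)+1)) + (r*(n:ℝ)*β)*Real.log t
        - Real.log (Real.Gamma (r*(n:ℝ)*β+1)) := by
    rw [Real.log_mul (by positivity) (by positivity),
      Real.log_div (by positivity) hfpos.ne',
      Real.log_div (by positivity) hGy0.ne',
      Real.log_mul hGx0.ne' (by positivity),
      Real.log_pow, Real.log_rpow ht]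
    ring
  -- log expansions
  have hlx : Real.log (r*(n:ℝ)) = Real.log r + Real.log n := Real.log_mul hr.ne' hn0.ne'
  have hly : Real.log (r*(n:ℝ)*β) = Real.log (r*β) + Real.log n := by
    rw [show r*(n:ℝ)*β = (r*β)*(n:ℝ) by ring, Real.log_mul hrβ.ne' hn0.ne']
  -- Gamma and factorial bounds
  have hGx := log_gamma_bounds (r*(n:ℝ)) hx1
  have hGy := log_gamma_bounds (r*(n:ℝ)*β) hy1
  have hF := log_factorial_bounds n (Nat.one_le_iff_ne_zero.2 hnne)
  rw [hlx] at hGx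
  rw [hly] at hGy
  -- crude bounds on the error logs
  have hlr : 0 ≤ Real.log (r+1) := Real.log_nonneg (by linarith)
  have hln1 : 0 ≤ Real.log ((n:ℝ)+1) := Real.log_nonneg (by linarith)
  have key : ∀ z : ℝ, 0 < z → z ≤ (r+1)*((n:ℝ)+1) →
      Real.log z ≤ Real.log (r+1) + Real.log ((n:ℝ)+1) := by
    intro z hz hz2
    calc Real.log z ≤ Real.log ((r+1)*((n:ℝ)+1)) := Real.log_le_log hz hz2
    _ = _ := Real.log_mul (by linarith) (by linarith)
  have b1 : Real.log (r*(n:ℝ)+1) ≤ Real.log (r+1) + Real.log ((n:ℝ)+1) :=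
    key _ (by linarith) (by linarith)
  have b2 : Real.log (r*(n:ℝ)*β+1) ≤ Real.log (r+1) + Real.log ((n:ℝ)+1) :=
    key _ (by linarith) (by linarith)
  have b3 : Real.log r + Real.log n ≤ Real.log (r+1) + Real.log ((n:ℝ)+1) := by
    rw [← hlx]; exact key _ hx0 (by linarith)
  have b4 : Real.log (r*β) + Real.log n ≤ Real.log (r+1) + Real.log ((n:ℝ)+1) := by
    rw [← hly]; exact key _ hy0 (by linarith)
  have b5 : Real.log n ≤ Real.log ((n:ℝ)+1) := Real.log_le_log hn0 (by linarith)
  rw [hlogA, abs_le]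
  obtain ⟨hGx1, hGx2⟩ := hGx
  obtain ⟨hGy1, hGy2⟩ := hGy
  obtain ⟨hF1, hF2⟩ := hF
  constructor
  · linarith [hGx1, hGy2, hF2, b1, b2, b3, b4, b5, hlr, hln1]
  · linarith [hGx2, hGy1, hF1, b1, b2, b3, b4, b5, hlr, hln1]


private lemma series_eq {Ω : Type*} [MeasurableSpace Ω] (P : Measure Ω) [IsProbabilityMeasure P]
    (X : Ω → ℝ) (hXm : Measurable X) (hX0 : ∀ ω, 0 ≤ X ω)
    (β t lam : ℝ) (ht : 0 < t) (hlam : 0 < lam)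
    (hmom : ∀ q : ℝ, 0 < q →
      ∫⁻ ω, ENNReal.ofReal (X ω ^ q) ∂P
        = ENNReal.ofReal (Real.Gamma (q + 1) * t ^ (q * β) / Real.Gamma (q * β + 1)))
    (r : ℝ) (hr : 0 < r) :
    ∫⁻ ω, ENNReal.ofReal (Real.exp (lam * X ω ^ r)) ∂P
      = ∑' n : ℕ, ENNReal.ofReal (lam^n / n.factorial *
          (Real.Gamma (r*(n:ℝ)+1) * t^(r*(n:ℝ)*β) / Real.Gamma (r*(n:ℝ)*β+1))) := by
  have hptwise : ∀ ω, ENNReal.ofReal (Real.exp (lam * X ω ^ r))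
      = ∑' n : ℕ, ENNReal.ofReal (lam^n / n.factorial * X ω ^ (r*(n:ℝ))) := by
    intro ω
    have hXω := hX0 ω
    have hsum : Summable (fun n : ℕ => (lam * X ω ^ r)^n / n.factorial) :=
      Real.summable_pow_div_factorial _
    have hexp : Real.exp (lam * X ω ^ r) = ∑' n:ℕ, (lam * X ω ^ r)^n / n.factorial := by
      rw [Real.exp_eq_exp_ℝ, NormedSpace.exp_eq_tsum_div]
    rw [hexp, ENNReal.ofReal_tsum_of_nonneg (fun n => by positivity) hsum]
    congr 1; funext n
    congr 1
    have hre : (X ω ^ r)^n = X ω ^ (r*(n:ℝ)) := by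
      rw [Real.rpow_mul hXω, Real.rpow_natCast]
    rw [mul_pow, hre]; ring
  have hmeas : ∀ n : ℕ, Measurable
      (fun ω => ENNReal.ofReal (lam^n / n.factorial * X ω ^ (r*(n:ℝ)))) := by
    intro n
    apply Measurable.ennreal_ofReal
    exact measurable_const.mul
      ((Real.continuous_rpow_const (by positivity : (0:ℝ) ≤ r*(n:ℝ))).measurable.comp hXm)
  rw [lintegral_congr hptwise, lintegral_tsum (fun n => (hmeas n).aemeasurable)]
  congr 1; funext n
  have hcn : (0:ℝ) ≤ lam^n / n.factorial := by positivity
  simp_rw [ENNReal.ofReal_mul hcn]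
  have hm2 : Measurable (fun ω => ENNReal.ofReal (X ω ^ (r*(n:ℝ)))) :=
    Measurable.ennreal_ofReal
      ((Real.continuous_rpow_const (by positivity : (0:ℝ) ≤ r*(n:ℝ))).measurable.comp hXm)
  rw [lintegral_const_mul (ENNReal.ofReal (lam^n / n.factorial)) hm2]
  rcases Nat.eq_zero_or_pos n with rfl | hn
  · simp only [Nat.cast_zero, mul_zero, Real.rpow_zero, pow_zero, Nat.factorial_zero,
      Nat.cast_one, zero_mul, zero_add, Real.Gamma_one]
    simp [measure_univ]
  · have hq : 0 < r*(n:ℝ) := by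
      have : (0:ℝ) < n := by exact_mod_cast hn
      positivity
    rw [hmom _ hq, ← ENNReal.ofReal_mul hcn]


private lemma A_exp_bounds (lam t r β : ℝ) (hlam : 0 < lam) (ht : 0 < t) (hr : 0 < r)
    (hβ0 : 0 < β) (hβ1 : β < 1) (n : ℕ) (hn : 1 ≤ (n:ℝ) * (r*β)) :
    lam^n / n.factorial * (Real.Gamma (r*n+1) * t^(r*(n:ℝ)*β) / Real.Gamma (r*n*β+1))
      ≤ Real.exp (3+4*Real.log (r+1)) * ((n:ℝ)+1)^4 *
        Real.exp ((n:ℝ)*((Real.log lam + r*Real.log r + r*β*Real.log t + 1 - r + r*β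
            - r*β*Real.log (r*β)) + (r-1-r*β)*Real.log n)) ∧
    Real.exp ((n:ℝ)*((Real.log lam + r*Real.log r + r*β*Real.log t + 1 - r + r*β
            - r*β*Real.log (r*β)) + (r-1-r*β)*Real.log n))
      ≤ Real.exp (3+4*Real.log (r+1)) * ((n:ℝ)+1)^4 *
        (lam^n / n.factorial * (Real.Gamma (r*n+1) * t^(r*(n:ℝ)*β) / Real.Gamma (r*n*β+1))) := by
  have h := A_log_est lam t r β hlam ht hr hβ0 hβ1 n hn
  rw [abs_le] at h
  have hGx0 : 0 < Real.Gamma (r*(n:ℝ)+1) := Real.Gamma_pos_of_pos (by positivity)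
  have hGy0 : 0 < Real.Gamma (r*(n:ℝ)*β+1) := Real.Gamma_pos_of_pos (by positivity)
  have hfpos : (0:ℝ) < n.factorial := by exact_mod_cast n.factorial_pos
  have hA0 : 0 < lam^n / n.factorial *
      (Real.Gamma (r*n+1) * t^(r*(n:ℝ)*β) / Real.Gamma (r*n*β+1)) := by
    apply mul_pos (by positivity)
    exact div_pos (mul_pos hGx0 (Real.rpow_pos_of_pos ht _)) hGy0
  have hexp4 : Real.exp (4*Real.log ((n:ℝ)+1)) = ((n:ℝ)+1)^4 := by
    rw [show (4:ℝ)*Real.log ((n:ℝ)+1) = ((4:ℕ):ℝ)*Real.log ((n:ℝ)+1) by norm_num,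
      Real.exp_nat_mul, Real.exp_log (by positivity)]
  constructor
  · calc lam^n / n.factorial * (Real.Gamma (r*n+1) * t^(r*(n:ℝ)*β) / Real.Gamma (r*n*β+1))
        = Real.exp (Real.log (lam^n / n.factorial *
            (Real.Gamma (r*n+1) * t^(r*(n:ℝ)*β) / Real.Gamma (r*n*β+1)))) :=
          (Real.exp_log hA0).symm
    _ ≤ Real.exp (((n:ℝ)*((Real.log lam + r*Real.log r + r*β*Real.log t + 1 - r + r*β
            - r*β*Real.log (r*β)) + (r-1-r*β)*Real.log n))
          + ((3+4*Real.log (r+1)) + 4*Real.log ((n:ℝ)+1))) := by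
          apply Real.exp_le_exp.2; linarith [h.2]
    _ = _ := by
          rw [Real.exp_add, Real.exp_add, hexp4]; ring
  · calc Real.exp ((n:ℝ)*((Real.log lam + r*Real.log r + r*β*Real.log t + 1 - r + r*β
            - r*β*Real.log (r*β)) + (r-1-r*β)*Real.log n))
        ≤ Real.exp (Real.log (lam^n / n.factorial *
            (Real.Gamma (r*n+1) * t^(r*(n:ℝ)*β) / Real.Gamma (r*n*β+1)))
          + ((3+4*Real.log (r+1)) + 4*Real.log ((n:ℝ)+1))) := by
          apply Real.exp_le_exp.2; linarith [h.1]
    _ = _ := by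
          rw [Real.exp_add, Real.exp_add, hexp4, Real.exp_log hA0]; ring


private lemma A_nonneg (lam t r β : ℝ) (hlam : 0 < lam) (ht : 0 < t) (hr : 0 < r)
    (hβ0 : 0 < β) (n : ℕ) :
    0 ≤ lam^n / n.factorial * (Real.Gamma (r*n+1) * t^(r*(n:ℝ)*β) / Real.Gamma (r*n*β+1)) := by
  have hGx0 : 0 < Real.Gamma (r*(n:ℝ)+1) := Real.Gamma_pos_of_pos (by positivity)
  have hGy0 : 0 < Real.Gamma (r*(n:ℝ)*β+1) := Real.Gamma_pos_of_pos (by positivity)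
  have hfpos : (0:ℝ) < n.factorial := by exact_mod_cast n.factorial_pos
  have := Real.rpow_pos_of_pos ht (r*(n:ℝ)*β)
  positivity

private lemma summable_A (lam t r β ρ : ℝ) (hlam : 0 < lam) (ht : 0 < t) (hr : 0 < r)
    (hβ0 : 0 < β) (hβ1 : β < 1) (hρ : ρ < 0)
    (hev : ∀ᶠ n : ℕ in atTop,
      (Real.log lam + r*Real.log r + r*β*Real.log t + 1 - r + r*β - r*β*Real.log (r*β))
        + (r-1-r*β)*Real.log n ≤ ρ) :
    Summable (fun n : ℕ => lam^n / n.factorial *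
      (Real.Gamma (r*n+1) * t^(r*(n:ℝ)*β) / Real.Gamma (r*n*β+1))) := by
  have hrβ : 0 < r*β := mul_pos hr hβ0
  obtain ⟨N₀, hN₀⟩ := eventually_atTop.1 hev
  set N : ℕ := max N₀ (⌈1/(r*β)⌉₊ + 1) with hN
  set q : ℝ := Real.exp ρ with hq
  have hq0 : 0 < q := Real.exp_pos _
  have hq1 : q < 1 := Real.exp_lt_one_iff.2 hρ
  set C : ℝ := Real.exp (3+4*Real.log (r+1)) with hC
  -- eventual bound
  have hbound : ∀ n : ℕ, N ≤ n → lam^n / n.factorial *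
      (Real.Gamma (r*n+1) * t^(r*(n:ℝ)*β) / Real.Gamma (r*n*β+1))
      ≤ C * ((n:ℝ)+1)^4 * q^n := by
    intro n hn
    have hn1 : (⌈1/(r*β)⌉₊ + 1 : ℕ) ≤ n := le_trans (le_max_right _ _) hn
    have hcl : 1/(r*β) ≤ (n:ℝ) := by
      calc 1/(r*β) ≤ (⌈1/(r*β)⌉₊ : ℝ) := Nat.le_ceil _
      _ ≤ (n:ℝ) := by exact_mod_cast Nat.le_of_succ_le hn1
    have hge : 1 ≤ (n:ℝ) * (r*β) := by
      rw [div_le_iff₀ hrβ] at hcl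
      linarith
    have h := (A_exp_bounds lam t r β hlam ht hr hβ0 hβ1 n hge).1
    refine h.trans ?_
    have hE : (n:ℝ)*((Real.log lam + r*Real.log r + r*β*Real.log t + 1 - r + r*β
        - r*β*Real.log (r*β)) + (r-1-r*β)*Real.log n) ≤ (n:ℝ)*ρ :=
      mul_le_mul_of_nonneg_left (hN₀ n (le_trans (le_max_left _ _) hn)) (by positivity)
    have : Real.exp ((n:ℝ)*((Real.log lam + r*Real.log r + r*β*Real.log t + 1 - r + r*β
        - r*β*Real.log (r*β)) + (r-1-r*β)*Real.log n)) ≤ q^n := by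
      rw [hq, ← Real.exp_nat_mul]
      exact Real.exp_le_exp.2 hE
    calc C * ((n:ℝ)+1)^4 * Real.exp _ ≤ C * ((n:ℝ)+1)^4 * q^n := by
          apply mul_le_mul_of_nonneg_left this (by positivity)
    _ = C * ((n:ℝ)+1)^4 * q^n := rfl
  -- summable majorant
  have hmaj : Summable (fun n : ℕ => C * ((n:ℝ)+1)^4 * q^n) := by
    have h1 : Summable (fun n : ℕ => ((n:ℝ))^4 * q^n) :=
      summable_pow_mul_geometric_of_norm_lt_one 4 (by rwa [Real.norm_eq_abs, abs_of_pos hq0])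
    have h2 : Summable (fun n : ℕ => ((n:ℝ)+1)^4 * q^(n+1)) := by
      have := (summable_nat_add_iff 1).2 h1
      exact this.congr (fun n => by push_cast; ring)
    have h3 : Summable (fun n : ℕ => ((n:ℝ)+1)^4 * q^n) := by
      have := h2.mul_left q⁻¹
      exact this.congr (fun n => by
        field_simp [pow_succ]
        ring)
    exact (h3.mul_left C).congr (fun n => by ring)
  rw [← summable_nat_add_iff N]
  apply Summable.of_nonneg_of_le
    (fun n => A_nonneg lam t r β hlam ht hr hβ0 (n+N))
    (fun n => hbound (n+N) (by omega))
  exact ((summable_nat_add_iff N).2 hmaj).congr (fun n => by push_cast; ring_nf)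


private lemma tendsto_A (lam t r β c' : ℝ) (hlam : 0 < lam) (ht : 0 < t) (hr : 0 < r)
    (hβ0 : 0 < β) (hβ1 : β < 1) (hc' : 0 < c')
    (hev : ∀ᶠ n : ℕ in atTop, c' ≤
      (Real.log lam + r*Real.log r + r*β*Real.log t + 1 - r + r*β - r*β*Real.log (r*β))
        + (r-1-r*β)*Real.log n) :
    Tendsto (fun n : ℕ => lam^n / n.factorial *
      (Real.Gamma (r*n+1) * t^(r*(n:ℝ)*β) / Real.Gamma (r*n*β+1))) atTop atTop := by
  have hrβ : 0 < r*β := mul_pos hr hβ0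
  set K : ℝ := 3+4*Real.log (r+1) with hK
  have hC0 : (0:ℝ) < Real.exp K := Real.exp_pos _
  have hev2 : ∀ᶠ n : ℕ in atTop, 1 ≤ (n:ℝ)*(r*β) :=
    (tendsto_natCast_atTop_atTop.atTop_mul_const hrβ).eventually_ge_atTop 1
  have hlb : ∀ᶠ n : ℕ in atTop,
      Real.exp (c'*n - K - 4*Real.log ((n:ℝ)+1)) ≤ lam^n / n.factorial *
        (Real.Gamma (r*n+1) * t^(r*(n:ℝ)*β) / Real.Gamma (r*n*β+1)) := by
    filter_upwards [hev, hev2] with n h1 h2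
    have h := (A_exp_bounds lam t r β hlam ht hr hβ0 hβ1 n h2).2
    have hE : c'*(n:ℝ) ≤ (n:ℝ)*((Real.log lam + r*Real.log r + r*β*Real.log t + 1 - r + r*β
        - r*β*Real.log (r*β)) + (r-1-r*β)*Real.log n) := by
      have := mul_le_mul_of_nonneg_left h1 (Nat.cast_nonneg n : (0:ℝ) ≤ n)
      linarith [this]
    have hchain : Real.exp (c'*n) ≤ Real.exp K * ((n:ℝ)+1)^4 * (lam^n / n.factorial *
        (Real.Gamma (r*n+1) * t^(r*(n:ℝ)*β) / Real.Gamma (r*n*β+1))) :=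
      le_trans (Real.exp_le_exp.2 hE) h
    have hexp4 : Real.exp (4*Real.log ((n:ℝ)+1)) = ((n:ℝ)+1)^4 := by
      rw [show (4:ℝ)*Real.log ((n:ℝ)+1) = ((4:ℕ):ℝ)*Real.log ((n:ℝ)+1) by norm_num,
        Real.exp_nat_mul, Real.exp_log (by positivity)]
    have heq : Real.exp (c'*n - K - 4*Real.log ((n:ℝ)+1))
        = Real.exp (c'*n) / (Real.exp K * ((n:ℝ)+1)^4) := by
      rw [Real.exp_sub, Real.exp_sub, hexp4, div_div]
    rw [heq, div_le_iff₀ (by positivity)]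
    calc Real.exp (c'*n) ≤ _ := hchain
    _ = _ := by ring
  have htend : Tendsto (fun n : ℕ => Real.exp (c'*n - K - 4*Real.log ((n:ℝ)+1)))
      atTop atTop := by
    apply Real.tendsto_exp_atTop.comp
    have hlog : ∀ᶠ n : ℕ in atTop, 4*Real.log ((n:ℝ)+1) ≤ (c'/2)*n := by
      have hlo := Real.isLittleO_log_id_atTop.def (show (0:ℝ) < c'/16 by positivity)
      have hcomp : Tendsto (fun n : ℕ => (n:ℝ)+1) atTop atTop :=
        tendsto_atTop_add_const_right _ 1 tendsto_natCast_atTop_atTop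
      filter_upwards [hcomp.eventually hlo, eventually_ge_atTop 1] with n hn hn1
      have hn1' : (1:ℝ) ≤ n := by exact_mod_cast hn1
      simp only [Real.norm_eq_abs, id_eq] at hn
      have h2 : Real.log ((n:ℝ)+1) ≤ c'/16 * ((n:ℝ)+1) := by
        have := le_abs_self (Real.log ((n:ℝ)+1))
        have habs : |(n:ℝ)+1| = (n:ℝ)+1 := abs_of_pos (by linarith)
        rw [habs] at hn
        linarith
      nlinarith
    have hbase : Tendsto (fun n : ℕ => (c'/2)*(n:ℝ) - K) atTop atTop := by
      apply tendsto_atTop_add_const_right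
      exact tendsto_natCast_atTop_atTop.const_mul_atTop (by positivity)
    apply tendsto_atTop_mono' _ _ hbase
    filter_upwards [hlog] with n hn
    linarith
  exact tendsto_atTop_mono' _ hlb htend


/-- Let `β ∈ (0,1)`, `t > 0`, `λ > 0`, and let `X ≥ 0` be a random
variable with the moments of an inverse `β`-stable subordinator at time `t`:
`E[X^q] = Γ(q+1) t^(qβ) / Γ(qβ+1)` for every `q > 0`.  Then:
(i) for `r ∈ (0, 1/(1-β))`, `E[exp (λ X^r)] < ∞`;
(ii) for `r > 1/(1-β)`, `E[exp (λ X^r)] = ∞`;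
(iii) for `r = 1/(1-β)`, `E[exp (λ X^r)] < ∞` if `λ t^(r-1) < (r-1)^(r-1)/r^r` and
`E[exp (λ X^r)] = ∞` if `λ t^(r-1) > (r-1)^(r-1)/r^r`. -/
theorem exp_moment_inverse_stable_threshold
    {Ω : Type*} [MeasurableSpace Ω] (P : Measure Ω) [IsProbabilityMeasure P]
    (X : Ω → ℝ) (hXm : Measurable X) (hX0 : ∀ ω, 0 ≤ X ω)
    (β t lam : ℝ) (hβ0 : 0 < β) (hβ1 : β < 1) (ht : 0 < t) (hlam : 0 < lam)
    (hmom : ∀ q : ℝ, 0 < q →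
      ∫⁻ ω, ENNReal.ofReal (X ω ^ q) ∂P
        = ENNReal.ofReal (Real.Gamma (q + 1) * t ^ (q * β) / Real.Gamma (q * β + 1))) :
    (∀ r : ℝ, 0 < r → r < 1 / (1 - β) →
      ∫⁻ ω, ENNReal.ofReal (Real.exp (lam * X ω ^ r)) ∂P < ⊤) ∧
    (∀ r : ℝ, 1 / (1 - β) < r →
      ∫⁻ ω, ENNReal.ofReal (Real.exp (lam * X ω ^ r)) ∂P = ⊤) ∧
    (∀ r : ℝ, r = 1 / (1 - β) →
      (lam * t ^ (r - 1) < (r - 1) ^ (r - 1) / r ^ r →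
        ∫⁻ ω, ENNReal.ofReal (Real.exp (lam * X ω ^ r)) ∂P < ⊤) ∧
      ((r - 1) ^ (r - 1) / r ^ r < lam * t ^ (r - 1) →
        ∫⁻ ω, ENNReal.ofReal (Real.exp (lam * X ω ^ r)) ∂P = ⊤)) := by
  have hβ' : 0 < 1 - β := by linarith
  have hloginf : Tendsto (fun n : ℕ => Real.log n) atTop atTop :=
    Real.tendsto_log_atTop.comp tendsto_natCast_atTop_atTop
  -- finiteness from summability
  have hfin : ∀ r : ℝ, 0 < r →
      Summable (fun n : ℕ => lam^n / n.factorial *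
        (Real.Gamma (r*n+1) * t^(r*(n:ℝ)*β) / Real.Gamma (r*n*β+1))) →
      ∫⁻ ω, ENNReal.ofReal (Real.exp (lam * X ω ^ r)) ∂P < ⊤ := by
    intro r hr hsum
    rw [series_eq P X hXm hX0 β t lam ht hlam hmom r hr,
      ← ENNReal.ofReal_tsum_of_nonneg (fun n => A_nonneg lam t r β hlam ht hr hβ0 n) hsum]
    exact ENNReal.ofReal_lt_top
  -- divergence from tendsto
  have htop : ∀ r : ℝ, 0 < r →
      Tendsto (fun n : ℕ => lam^n / n.factorial *
        (Real.Gamma (r*n+1) * t^(r*(n:ℝ)*β) / Real.Gamma (r*n*β+1))) atTop atTop →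
      ∫⁻ ω, ENNReal.ofReal (Real.exp (lam * X ω ^ r)) ∂P = ⊤ := by
    intro r hr htd
    rw [series_eq P X hXm hX0 β t lam ht hlam hmom r hr]
    by_contra hne
    have h0 := ENNReal.tendsto_atTop_zero_of_tsum_ne_top hne
    have h1 : ∀ᶠ n : ℕ in atTop, (1:ℝ) ≤ lam^n / n.factorial *
        (Real.Gamma (r*n+1) * t^(r*(n:ℝ)*β) / Real.Gamma (r*n*β+1)) :=
      htd.eventually_ge_atTop 1
    have h2 : ∀ᶠ n : ℕ in atTop, ENNReal.ofReal (lam^n / n.factorial *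
        (Real.Gamma (r*n+1) * t^(r*(n:ℝ)*β) / Real.Gamma (r*n*β+1))) < 1 :=
      h0.eventually_lt_const (by norm_num)
    obtain ⟨n, hn1, hn2⟩ := (h1.and h2).exists
    exact absurd (ENNReal.one_le_ofReal.2 hn1) (not_le.2 hn2)
  refine ⟨?_, ?_, ?_⟩
  · -- case (i): r < 1/(1-β)
    intro r hr hrlt
    have hδ : r - 1 - r*β < 0 := by
      have h1 : r*(1-β) < 1 := (lt_div_iff₀ hβ').1 hrlt
      nlinarith
    apply hfin r hr
    refine summable_A lam t r β (-1) hlam ht hr hβ0 hβ1 (by norm_num) ?_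
    set c0 := Real.log lam + r*Real.log r + r*β*Real.log t + 1 - r + r*β
      - r*β*Real.log (r*β) with hc0
    filter_upwards [hloginf.eventually_ge_atTop ((-1 - c0)/(r-1-r*β))] with n hn
    have h2 := mul_le_mul_of_nonpos_left hn hδ.le
    rw [mul_div_cancel₀ _ (ne_of_lt hδ)] at h2
    linarith
  · -- case (ii): r > 1/(1-β)
    intro r hrgt
    have hr0 : 0 < r := lt_trans (by positivity) hrgt
    have hδ : 0 < r - 1 - r*β := by
      have h1 : 1 < r*(1-β) := (div_lt_iff₀ hβ').1 hrgt
      nlinarith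
    apply htop r hr0
    refine tendsto_A lam t r β 1 hlam ht hr0 hβ0 hβ1 one_pos ?_
    set c0 := Real.log lam + r*Real.log r + r*β*Real.log t + 1 - r + r*β
      - r*β*Real.log (r*β) with hc0
    filter_upwards [hloginf.eventually_ge_atTop ((1 - c0)/(r-1-r*β))] with n hn
    have h2 := mul_le_mul_of_nonneg_left hn hδ.le
    rw [mul_div_cancel₀ _ (ne_of_gt hδ)] at h2
    linarith
  · -- case (iii): r = 1/(1-β)
    intro r hre
    have hr1 : 1 < r := by rw [hre]; exact (one_lt_div hβ').2 (by linarith)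
    have hr0 : 0 < r := lt_trans one_pos hr1
    have hrβeq : r*β = r - 1 := by
      have h1 : r*(1-β) = 1 := by rw [hre]; field_simp
      nlinarith
    have hδ0 : r - 1 - r*β = 0 := by linarith
    have hD : (0:ℝ) < (r-1)^(r-1:ℝ) := Real.rpow_pos_of_pos (by linarith) _
    have hR : (0:ℝ) < r^(r:ℝ) := Real.rpow_pos_of_pos hr0 _
    have htr : (0:ℝ) < t^(r-1:ℝ) := Real.rpow_pos_of_pos ht _
    have hc0eq : Real.log lam + r*Real.log r + r*β*Real.log t + 1 - r + r*β
        - r*β*Real.log (r*β)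
        = Real.log (lam * t^(r-1:ℝ) * (r^(r:ℝ)/(r-1)^(r-1:ℝ))) := by
      rw [hrβeq, Real.log_mul (by positivity) (by positivity),
        Real.log_mul (ne_of_gt hlam) (ne_of_gt htr),
        Real.log_div (ne_of_gt hR) (ne_of_gt hD),
        Real.log_rpow ht, Real.log_rpow hr0, Real.log_rpow (by linarith : (0:ℝ) < r-1)]
      ring
    constructor
    · intro hcond
      apply hfin r hr0
      refine summable_A lam t r β
        (Real.log (lam * t^(r-1:ℝ) * (r^(r:ℝ)/(r-1)^(r-1:ℝ)))) hlam ht hr0 hβ0 hβ1 ?_ ?_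
      · apply Real.log_neg (by positivity)
        have h2 : lam * t^(r-1:ℝ) * (r^(r:ℝ)/(r-1)^(r-1:ℝ))
            < ((r-1)^(r-1:ℝ)/r^(r:ℝ)) * (r^(r:ℝ)/(r-1)^(r-1:ℝ)) :=
          mul_lt_mul_of_pos_right hcond (by positivity)
        have h3 : ((r-1)^(r-1:ℝ)/r^(r:ℝ)) * (r^(r:ℝ)/(r-1)^(r-1:ℝ)) = 1 := by
          field_simp
        linarith
      · refine Filter.Eventually.of_forall (fun n => ?_)
        rw [hδ0, zero_mul, add_zero, hc0eq]
    · intro hcond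
      apply htop r hr0
      refine tendsto_A lam t r β
        (Real.log (lam * t^(r-1:ℝ) * (r^(r:ℝ)/(r-1)^(r-1:ℝ)))) hlam ht hr0 hβ0 hβ1 ?_ ?_
      · apply Real.log_pos
        have h2 : ((r-1)^(r-1:ℝ)/r^(r:ℝ)) * (r^(r:ℝ)/(r-1)^(r-1:ℝ))
            < lam * t^(r-1:ℝ) * (r^(r:ℝ)/(r-1)^(r-1:ℝ)) :=
          mul_lt_mul_of_pos_right hcond (by positivity)
        have h3 : ((r-1)^(r-1:ℝ)/r^(r:ℝ)) * (r^(r:ℝ)/(r-1)^(r-1:ℝ)) = 1 := by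
          field_simp
        linarith
      · refine Filter.Eventually.of_forall (fun n => ?_)
        rw [hδ0, zero_mul, add_zero, hc0eq]
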